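/- In one-sided classical linear logic LL (MALL extended with exponentials ? and !), ?-weakening and ?-contraction being primitive rules, the weakening-of-bang rule is height-preserving admissible: if ⊢ Γ, !F is derivable with height at most n, then ⊢ Γ, F is derivable with height at most n. -/
import Mathlib


/-- Formulas of one-sided classical propositional linear logic LL. -/
inductive LForm where
  | pos : ℕ → LForm          -- atom p
  | neg : ℕ → LForm          -- dual atom p⊥
  | one : LForm
  | bot : LForm
  | top : LForm
  | zero : LForm
  | tensor : LForm → LForm → LForm
  | parr : LForm → LForm → LForm
  | with_ : LForm → LForm → LForm
  | oplus : LForm → LForm → LForm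
  | quest : LForm → LForm    -- ?A
  | bang : LForm → LForm     -- !A

open LForm

/-- `Der n Γ` : the one-sided sequent `⊢ Γ` is derivable in LL with
height at most `n`. -/
inductive Der : ℕ → Multiset LForm → Prop where
  | ax (n : ℕ) (p : ℕ) : Der (n + 1) {neg p, pos p}
  | one_ (n : ℕ) : Der (n + 1) {one}
  | bot_ {n Γ} : Der n Γ → Der (n + 1) (bot ::ₘ Γ)
  | top_ (n : ℕ) (Γ : Multiset LForm) : Der (n + 1) (top ::ₘ Γ)
  | tensor_ {n Γ₁ Γ₂ A B} : Der n (A ::ₘ Γ₁) → Der n (B ::ₘ Γ₂) →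
      Der (n + 1) (tensor A B ::ₘ (Γ₁ + Γ₂))
  | parr_ {n Γ A B} : Der n (A ::ₘ B ::ₘ Γ) → Der (n + 1) (parr A B ::ₘ Γ)
  | with_' {n Γ A B} : Der n (A ::ₘ Γ) → Der n (B ::ₘ Γ) →
      Der (n + 1) (with_ A B ::ₘ Γ)
  | oplus1 {n Γ A B} : Der n (A ::ₘ Γ) → Der (n + 1) (oplus A B ::ₘ Γ)
  | oplus2 {n Γ A B} : Der n (B ::ₘ Γ) → Der (n + 1) (oplus A B ::ₘ Γ)
  /-- Promotion: the context consists only of ?-formulas. -/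
  | promotion {n} (Γ : Multiset LForm) {A} :
      Der n (A ::ₘ Γ.map quest) → Der (n + 1) (bang A ::ₘ Γ.map quest)
  | dereliction {n Γ A} : Der n (A ::ₘ Γ) → Der (n + 1) (quest A ::ₘ Γ)
  | questW {n Γ} (A : LForm) : Der n Γ → Der (n + 1) (quest A ::ₘ Γ)
  | questC {n Γ A} : Der n (quest A ::ₘ quest A ::ₘ Γ) →
      Der (n + 1) (quest A ::ₘ Γ)

lemma der_eq {n} {s t : Multiset LForm} (h : Der n s) (e : s = t) : Der n t := e ▸ h

lemma der_succ {n} {s : Multiset LForm} (h : Der n s) : Der (n+1) s := by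
  induction h with
  | ax n p => exact Der.ax _ _
  | one_ n => exact Der.one_ _
  | bot_ h ih => exact Der.bot_ ih
  | top_ n Γ => exact Der.top_ _ _
  | tensor_ h1 h2 ih1 ih2 => exact Der.tensor_ ih1 ih2
  | parr_ h ih => exact Der.parr_ ih
  | with_' h1 h2 ih1 ih2 => exact Der.with_' ih1 ih2
  | oplus1 h ih => exact Der.oplus1 ih
  | oplus2 h ih => exact Der.oplus2 ih
  | promotion Γ h ih => exact Der.promotion Γ ih
  | dereliction h ih => exact Der.dereliction ih
  | questW A h ih => exact Der.questW A ih
  | questC h ih => exact Der.questC ih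

lemma der_bangW {n Δ} (h : Der n Δ) :
    ∀ F Γ, Δ = bang F ::ₘ Γ → Der n (F ::ₘ Γ) := by
  induction h with
  | ax n p =>
    intro F Γ hEq
    exfalso
    have : bang F ∈ ({neg p, pos p} : Multiset LForm) :=
      hEq ▸ Multiset.mem_cons_self _ _
    simp at this
  | one_ n =>
    intro F Γ hEq
    exfalso
    have : bang F ∈ ({one} : Multiset LForm) := hEq ▸ Multiset.mem_cons_self _ _
    simp at this
  | bot_ h ih =>
    intro F Γ hEq
    rw [Multiset.cons_eq_cons] at hEq
    rcases hEq with ⟨h1, -⟩ | ⟨-, cs, h1, h2⟩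
    · exact absurd h1 (by simp)
    · subst h2
      refine der_eq (Der.bot_ (ih F cs h1)) ?_
      exact (Multiset.cons_swap _ _ _)
  | top_ n Γ₀ =>
    intro F Γ hEq
    rw [Multiset.cons_eq_cons] at hEq
    rcases hEq with ⟨h1, -⟩ | ⟨-, cs, h1, h2⟩
    · exact absurd h1 (by simp)
    · subst h2
      exact der_eq (Der.top_ n (F ::ₘ cs)) (Multiset.cons_swap _ _ _)
  | @tensor_ n Γ₁ Γ₂ A B h1 h2 ih1 ih2 =>
    intro F Γ hEq
    rw [Multiset.cons_eq_cons] at hEq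
    rcases hEq with ⟨h1', -⟩ | ⟨-, cs, hcs, h2'⟩
    · exact absurd h1' (by simp)
    · subst h2'
      have hmem : bang F ∈ Γ₁ + Γ₂ := hcs ▸ Multiset.mem_cons_self _ _
      rcases Multiset.mem_add.mp hmem with hm | hm
      · obtain ⟨Γ₁', e1⟩ := Multiset.exists_cons_of_mem hm
        have ecs : cs = Γ₁' + Γ₂ := by
          have : bang F ::ₘ cs = bang F ::ₘ (Γ₁' + Γ₂) := by
            rw [← hcs, e1, Multiset.cons_add]
          exact (Multiset.cons_inj_right _).mp this
        subst ecs
        have hp : Der n (A ::ₘ (F ::ₘ Γ₁')) := by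
          have := ih1 F (A ::ₘ Γ₁') (by
            rw [e1, Multiset.cons_swap])
          exact der_eq this (Multiset.cons_swap _ _ _)
        refine der_eq (Der.tensor_ hp h2) ?_
        rw [Multiset.cons_add, Multiset.cons_swap]
      · obtain ⟨Γ₂', e1⟩ := Multiset.exists_cons_of_mem hm
        have ecs : cs = Γ₁ + Γ₂' := by
          have : bang F ::ₘ cs = bang F ::ₘ (Γ₁ + Γ₂') := by
            rw [← hcs, e1, Multiset.add_cons]
          exact (Multiset.cons_inj_right _).mp this
        subst ecs
        have hp : Der n (B ::ₘ (F ::ₘ Γ₂')) := by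
          have := ih2 F (B ::ₘ Γ₂') (by
            rw [e1, Multiset.cons_swap])
          exact der_eq this (Multiset.cons_swap _ _ _)
        refine der_eq (Der.tensor_ h1 hp) ?_
        rw [Multiset.add_cons, Multiset.cons_swap]
  | @parr_ n Γ₀ A B h ih =>
    intro F Γ hEq
    rw [Multiset.cons_eq_cons] at hEq
    rcases hEq with ⟨h1, -⟩ | ⟨-, cs, h1, h2⟩
    · exact absurd h1 (by simp)
    · subst h2
      have hp := ih F (A ::ₘ B ::ₘ cs) (by
        rw [h1, Multiset.cons_swap B, Multiset.cons_swap A])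
      have hp' : Der n (A ::ₘ B ::ₘ (F ::ₘ cs)) := by
        refine der_eq hp ?_
        rw [Multiset.cons_swap F A, Multiset.cons_swap F B]
      exact der_eq (Der.parr_ hp') (Multiset.cons_swap _ _ _)
  | @with_' n Γ₀ A B h1 h2 ih1 ih2 =>
    intro F Γ hEq
    rw [Multiset.cons_eq_cons] at hEq
    rcases hEq with ⟨h1', -⟩ | ⟨-, cs, hcs, h2'⟩
    · exact absurd h1' (by simp)
    · subst h2'
      have hpA : Der n (A ::ₘ (F ::ₘ cs)) :=
        der_eq (ih1 F (A ::ₘ cs) (by rw [hcs, Multiset.cons_swap])) (Multiset.cons_swap _ _ _)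
      have hpB : Der n (B ::ₘ (F ::ₘ cs)) :=
        der_eq (ih2 F (B ::ₘ cs) (by rw [hcs, Multiset.cons_swap])) (Multiset.cons_swap _ _ _)
      exact der_eq (Der.with_' hpA hpB) (Multiset.cons_swap _ _ _)
  | @oplus1 n Γ₀ A B h ih =>
    intro F Γ hEq
    rw [Multiset.cons_eq_cons] at hEq
    rcases hEq with ⟨h1, -⟩ | ⟨-, cs, h1, h2⟩
    · exact absurd h1 (by simp)
    · subst h2
      have hp : Der n (A ::ₘ (F ::ₘ cs)) :=
        der_eq (ih F (A ::ₘ cs) (by rw [h1, Multiset.cons_swap])) (Multiset.cons_swap _ _ _)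
      exact der_eq (Der.oplus1 hp) (Multiset.cons_swap _ _ _)
  | @oplus2 n Γ₀ A B h ih =>
    intro F Γ hEq
    rw [Multiset.cons_eq_cons] at hEq
    rcases hEq with ⟨h1, -⟩ | ⟨-, cs, h1, h2⟩
    · exact absurd h1 (by simp)
    · subst h2
      have hp : Der n (B ::ₘ (F ::ₘ cs)) :=
        der_eq (ih F (B ::ₘ cs) (by rw [h1, Multiset.cons_swap])) (Multiset.cons_swap _ _ _)
      exact der_eq (Der.oplus2 hp) (Multiset.cons_swap _ _ _)
  | @promotion n Γ₀ A h ih =>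
    intro F Γ hEq
    rw [Multiset.cons_eq_cons] at hEq
    rcases hEq with ⟨h1, h2⟩ | ⟨-, cs, h1, h2⟩
    · injection h1 with hA
      subst hA; subst h2
      exact der_succ h
    · exfalso
      have : bang F ∈ Γ₀.map quest := h1 ▸ Multiset.mem_cons_self _ _
      rcases Multiset.mem_map.mp this with ⟨x, -, hx⟩
      exact LForm.noConfusion hx
  | @dereliction n Γ₀ A h ih =>
    intro F Γ hEq
    rw [Multiset.cons_eq_cons] at hEq
    rcases hEq with ⟨h1, -⟩ | ⟨-, cs, h1, h2⟩
    · exact absurd h1 (by simp)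
    · subst h2
      have hp : Der n (A ::ₘ (F ::ₘ cs)) :=
        der_eq (ih F (A ::ₘ cs) (by rw [h1, Multiset.cons_swap])) (Multiset.cons_swap _ _ _)
      exact der_eq (Der.dereliction hp) (Multiset.cons_swap _ _ _)
  | @questW n Γ₀ A h ih =>
    intro F Γ hEq
    rw [Multiset.cons_eq_cons] at hEq
    rcases hEq with ⟨h1, -⟩ | ⟨-, cs, h1, h2⟩
    · exact absurd h1 (by simp)
    · subst h2
      exact der_eq (Der.questW A (ih F cs h1)) (Multiset.cons_swap _ _ _)
  | @questC n Γ₀ A h ih =>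
    intro F Γ hEq
    rw [Multiset.cons_eq_cons] at hEq
    rcases hEq with ⟨h1, -⟩ | ⟨-, cs, h1, h2⟩
    · exact absurd h1 (by simp)
    · subst h2
      have hp := ih F (quest A ::ₘ quest A ::ₘ cs) (by
        rw [h1, Multiset.cons_swap (quest A) (bang F), Multiset.cons_swap (quest A) (bang F)])
      have hp' : Der n (quest A ::ₘ quest A ::ₘ (F ::ₘ cs)) := by
        refine der_eq hp ?_
        rw [Multiset.cons_swap F (quest A), Multiset.cons_swap F (quest A)]
      exact der_eq (Der.questC hp') (Multiset.cons_swap _ _ _)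

/-- Weakening-of-bang is height-preserving admissible in LL. -/
theorem ll_bang_weakening (n : ℕ) (Γ : Multiset LForm) (F : LForm)
    (h : Der n (LForm.bang F ::ₘ Γ)) : Der n (F ::ₘ Γ) :=
  der_bangW h F Γ rfl
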